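/- Let Δ be a d-dimensional simplicial complex whose (d−1)-st integral homology group H_{d−1}(Δ; ℤ) has nontrivial torsion. Then neither the symmetric homology polytope P_Δ nor the symmetric cohomology polytope P^Δ has the integer decomposition property. -/

import Mathlib

open Matrix BigOperators Pointwise

/-- An abstract simplicial complex on vertex set `Fin n`. -/
structure SC (n : ℕ) where
  faces : Finset (Finset (Fin n))
  down_closed : ∀ σ ∈ faces, ∀ τ, τ ⊆ σ → τ.Nonempty → τ ∈ faces
  face_nonempty : ∀ σ ∈ faces, σ.Nonempty

namespace SC

variable {n : ℕ}

/-- `K` is `d`-dimensional. -/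
def dimIs (K : SC n) (d : ℕ) : Prop :=
  (∀ σ ∈ K.faces, σ.card ≤ d + 1) ∧ ∃ σ ∈ K.faces, σ.card = d + 1

/-- `K` is pure of dimension `d`. -/
def pure (K : SC n) (d : ℕ) : Prop :=
  ∀ σ ∈ K.faces, ∃ τ ∈ K.faces, σ ⊆ τ ∧ τ.card = d + 1

/-- The `j`-dimensional faces of `K`. -/
abbrev fdex (K : SC n) (j : ℕ) : Type := {σ : Finset (Fin n) // σ ∈ K.faces ∧ σ.card = j + 1}

end SC

/-- Entry of the simplicial boundary matrix: for a codimension-one subface `τ ⊆ σ`,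
the sign `(-1)^k` where `k` is the position of the vertex removed from `σ`. -/
def bEntry {n : ℕ} (τ σ : Finset (Fin n)) : ℤ :=
  if τ ⊆ σ ∧ σ.card = τ.card + 1 then
    ∑ v ∈ σ \ τ, (-1 : ℤ) ^ ((σ.filter fun w => w < v).card)
  else 0

/-- The boundary matrix from `(j+1)`-dimensional faces to `j`-dimensional faces,
i.e. the boundary map `∂_{j+2}`… no: `K.B j` is the map `∂` whose columns are indexed
by the `(j+1)`-faces; in homological notation `K.B (d-1)` is `∂_d`. -/
def SC.B {n : ℕ} (K : SC n) (j : ℕ) : Matrix (K.fdex j) (K.fdex (j + 1)) ℤ :=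
  fun τ σ => bEntry τ.1 σ.1

/-- Strong connectivity of a `(j+1)`-dimensional pure complex: any two facets are
connected by a chain of facets successively sharing a ridge. -/
def SC.StronglyConnected {n : ℕ} (K : SC n) (j : ℕ) : Prop :=
  ∀ a b : K.fdex (j + 1),
    Relation.ReflTransGen (fun σ σ' : K.fdex (j + 1) => (σ.1 ∩ σ'.1).card = j + 1) a b

/-- the number of facets (of a `(j+1)`-dimensional complex) containing a given ridge -/
def SC.ridgeDeg {n : ℕ} (K : SC n) (j : ℕ) (τ : K.fdex j) : ℕ :=
  (Finset.univ.filter fun σ : K.fdex (j + 1) => τ.1 ⊆ σ.1).card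

section Poly

variable {ι κ : Type*} [Fintype ι] [Fintype κ]

def dot (x y : ι → ℝ) : ℝ := ∑ i, x i * y i

/-- the columns of `A` and their negatives, as real vectors -/
def colsPM (A : Matrix ι κ ℤ) : Set (ι → ℝ) :=
  {x | ∃ j : κ, x = (fun i => (A i j : ℝ)) ∨ x = fun i => -(A i j : ℝ)}

/-- the centrally symmetric polytope `conv [A | -A]` -/
def symPoly (A : Matrix ι κ ℤ) : Set (ι → ℝ) := convexHull ℝ (colsPM A)

def intVec (x : ι → ℝ) : Prop := ∀ i, ∃ z : ℤ, x i = (z : ℝ)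

def latticePts (P : Set (ι → ℝ)) : Set (ι → ℝ) := {x ∈ P | intVec x}

/-- a set is a lattice polytope iff it is the convex hull of its lattice points -/
def IsLatticePolytope (Q : Set (ι → ℝ)) : Prop := Q = convexHull ℝ (latticePts Q)

/-- the polar dual, taken within the linear span of `P` -/
def polarIn (P : Set (ι → ℝ)) : Set (ι → ℝ) :=
  {y | y ∈ Submodule.span ℝ P ∧ ∀ x ∈ P, dot x y ≤ 1}

/-- `P` is reflexive: its polar dual (within the affine hull of `P`) is a lattice polytope -/
def IsReflexive (P : Set (ι → ℝ)) : Prop := IsLatticePolytope (polarIn P)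

/-- every lattice point of the span of `P` is an integer combination of lattice points of `P` -/
def IsSpanning (P : Set (ι → ℝ)) : Prop :=
  ∀ x : ι → ℝ, intVec x → x ∈ Submodule.span ℝ P →
    x ∈ (Submodule.span ℤ (latticePts P) : Set (ι → ℝ))

/-- the integer decomposition property -/
def IsIDP (P : Set (ι → ℝ)) : Prop :=
  ∀ k : ℕ, ∀ x : ι → ℝ, intVec x → x ∈ (k : ℝ) • P →
    ∃ f : Fin k → (ι → ℝ), (∀ i, f i ∈ latticePts P) ∧ x = ∑ i, f i

/-- combinatorial equivalence: an inclusion-order isomorphism between the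
posets of exposed faces -/
def CombEquiv (P : Set (ι → ℝ)) (Q : Set (κ → ℝ)) : Prop :=
  Nonempty ({F : Set (ι → ℝ) // IsExposed ℝ P F} ≃o {F : Set (κ → ℝ) // IsExposed ℝ Q F})

/-- unimodular equivalence: an affine isomorphism between the affine hulls which
matches up the two polytopes and the lattice points of the affine hulls -/
def UniEquiv (P : Set (ι → ℝ)) (Q : Set (κ → ℝ)) : Prop :=
  ∃ f : (ι → ℝ) →ᵃ[ℝ] (κ → ℝ),
    Set.BijOn f (affineSpan ℝ P : Set (ι → ℝ)) (affineSpan ℝ Q : Set (κ → ℝ)) ∧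
    f '' P = Q ∧
    (∀ x ∈ (affineSpan ℝ P : Set (ι → ℝ)), intVec x → intVec (f x)) ∧
    (∀ y ∈ (affineSpan ℝ Q : Set (κ → ℝ)), intVec y →
      ∃ x ∈ (affineSpan ℝ P : Set (ι → ℝ)), intVec x ∧ f x = y)

/-- the facets of a polytope: the maximal proper exposed faces -/
def polyFacets (P : Set (ι → ℝ)) : Set (Set (ι → ℝ)) :=
  {F | IsExposed ℝ P F ∧ F ⊂ P ∧ ∀ G, IsExposed ℝ P G → F ⊆ G → G ⊂ P → G = F}

/-- independence of a set of columns of a rational matrix -/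
def colsIndep (A : Matrix ι κ ℚ) (S : Set κ) : Prop :=
  LinearIndependent ℚ (fun j : S => (fun i => A i (j : κ)))

/-- `S` is a basis of the column matroid `M[A]` -/
def IsBasisSet (A : Matrix ι κ ℚ) (S : Set κ) : Prop :=
  colsIndep A S ∧ ∀ S' : Set κ, S ⊆ S' → colsIndep A S' → S' = S

end Poly

/-- the standard cross-polytope -/
def stdCross (s : ℕ) : Set (Fin s → ℝ) :=
  convexHull ℝ {x | ∃ i : Fin s, x = Pi.single i 1 ∨ x = Pi.single i (-1)}

/-- a signed incidence matrix of the cycle on `n` vertices: column `j` is `e_{j+1} - e_j` -/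
def cycMat (n : ℕ) : Matrix (Fin n) (Fin n) ℤ :=
  fun i j => (if (i : ℕ) = ((j : ℕ) + 1) % n then 1 else 0) - (if i = j then 1 else 0)

/-- a signed incidence matrix of the facet-ridge graph of a `(j+1)`-dimensional
pseudomanifold without boundary: rows are facets, columns are ridges, and the two
facets containing a ridge receive opposite signs. -/
noncomputable def SC.frg {n : ℕ} (K : SC n) (j : ℕ) :
    Matrix (K.fdex (j + 1)) (K.fdex j) ℤ :=
  fun σ τ =>
    if τ.1 ⊆ σ.1 then
      (if ∀ σ' : K.fdex (j + 1), τ.1 ⊆ σ'.1 → σ' ≠ σ →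
          (σ'.1 \ τ.1).min ≤ (σ.1 \ τ.1).min then 1 else -1)
    else 0


namespace Stmt11Aux

set_option linter.unusedSectionVars false

variable {ι' κ' : Type*} [Fintype ι'] [Fintype κ']

noncomputable def colR (M : Matrix ι' κ' ℤ) (j : κ') : ι' → ℝ := fun r => (M r j : ℝ)

lemma neg_colR_mem (M : Matrix ι' κ' ℤ) (j : κ') : -colR M j ∈ colsPM M := by
  refine ⟨j, Or.inr ?_⟩
  funext i; simp [colR]

lemma colR_mem (M : Matrix ι' κ' ℤ) (j : κ') : colR M j ∈ colsPM M := ⟨j, Or.inl rfl⟩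

lemma zero_mem_symPoly [Nonempty κ'] (M : Matrix ι' κ' ℤ) : (0 : ι' → ℝ) ∈ symPoly M := by
  obtain ⟨j⟩ := ‹Nonempty κ'›
  have h1 : colR M j ∈ symPoly M := subset_convexHull ℝ _ (colR_mem M j)
  have h2 : -colR M j ∈ symPoly M := subset_convexHull ℝ _ (neg_colR_mem M j)
  have h := (convex_convexHull ℝ (colsPM M)) h1 h2 (by norm_num : (0:ℝ) ≤ 1/2)
    (by norm_num : (0:ℝ) ≤ 1/2) (by norm_num)
  simpa [symPoly] using h

lemma mem_symPoly_of_rep [Nonempty κ'] (M : Matrix ι' κ' ℤ) (μ : κ' → ℝ)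
    (hb : ∑ j, |μ j| ≤ 1) : (∑ j, μ j • colR M j) ∈ symPoly M := by
  classical
  set P := symPoly M with hP
  have hconv : Convex ℝ P := convex_convexHull ℝ _
  set pts : Option κ' → (ι' → ℝ) :=
    fun o => o.elim 0 (fun j => if 0 ≤ μ j then colR M j else -colR M j) with hpts
  set w : Option κ' → ℝ := fun o => o.elim (1 - ∑ j, |μ j|) (fun j => |μ j|) with hw
  have h0 : ∀ o ∈ Finset.univ, 0 ≤ w o := by
    rintro (_ | j) -
    · simpa [hw] using hb
    · simp [hw, abs_nonneg]
  have h1 : ∑ o, w o = 1 := by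
    rw [Fintype.sum_option]
    simp [hw]
  have h2 : ∀ o ∈ Finset.univ, pts o ∈ P := by
    rintro (_ | j) -
    · exact zero_mem_symPoly M
    · by_cases h : 0 ≤ μ j
      · simpa [hpts, h, hP, symPoly] using subset_convexHull ℝ _ (colR_mem M j)
      · simpa [hpts, h, hP, symPoly] using subset_convexHull ℝ _ (neg_colR_mem M j)
  have hmem := hconv.sum_mem h0 h1 h2
  have : ∑ o, w o • pts o = ∑ j, μ j • colR M j := by
    rw [Fintype.sum_option]
    simp only [hw, hpts, Option.elim]
    rw [smul_zero, zero_add]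
    refine Finset.sum_congr rfl fun j _ => ?_
    by_cases h : 0 ≤ μ j
    · simp [h, abs_of_nonneg h]
    · push_neg at h
      rw [if_neg (not_le.2 h), abs_of_neg h, smul_neg, ← neg_smul, neg_neg]
  rwa [this] at hmem

lemma rep_of_mem_symPoly (M : Matrix ι' κ' ℤ) {z : ι' → ℝ} (hz : z ∈ symPoly M) :
    ∃ μ : κ' → ℝ, ∑ j, |μ j| ≤ 1 ∧ z = ∑ j, μ j • colR M j := by
  classical
  suffices h : symPoly M ⊆ {z | ∃ μ : κ' → ℝ, ∑ j, |μ j| ≤ 1 ∧ z = ∑ j, μ j • colR M j} from h hz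
  apply convexHull_min
  · rintro x ⟨j, hx | hx⟩
    · refine ⟨fun j' => if j' = j then 1 else 0, ?_, ?_⟩
      · rw [Finset.sum_congr rfl (g := fun j' => if j' = j then (1:ℝ) else 0)
          (fun j' _ => by dsimp only; split <;> simp)]
        simp [Finset.sum_ite_eq']
      · rw [Finset.sum_congr rfl (g := fun j' => if j' = j then colR M j' else 0)
          (fun j' _ => by dsimp only; split <;> simp)]
        simp [Finset.sum_ite_eq']
        funext i; rw [hx]; rfl
    · refine ⟨fun j' => if j' = j then -1 else 0, ?_, ?_⟩
      · rw [Finset.sum_congr rfl (g := fun j' => if j' = j then (1:ℝ) else 0)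
          (fun j' _ => by dsimp only; split <;> simp)]
        simp [Finset.sum_ite_eq']
      · rw [Finset.sum_congr rfl (g := fun j' => if j' = j then -colR M j' else 0)
          (fun j' _ => by dsimp only; split <;> simp)]
        simp [Finset.sum_ite_eq']
        funext i; rw [hx]; simp [colR]
  · rintro a ⟨μa, hba, rfl⟩ b ⟨μb, hbb, rfl⟩ s t hs ht hst
    refine ⟨fun j => s * μa j + t * μb j, ?_, ?_⟩
    · calc ∑ j, |s * μa j + t * μb j| ≤ ∑ j, (s * |μa j| + t * |μb j|) := by
            refine Finset.sum_le_sum fun j _ => ?_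
            calc |s * μa j + t * μb j| ≤ |s * μa j| + |t * μb j| := abs_add_le _ _
              _ = s * |μa j| + t * |μb j| := by
                  rw [abs_mul, abs_mul, abs_of_nonneg hs, abs_of_nonneg ht]
        _ = s * ∑ j, |μa j| + t * ∑ j, |μb j| := by
            rw [Finset.sum_add_distrib, Finset.mul_sum, Finset.mul_sum]
        _ ≤ s * 1 + t * 1 := by
            gcongr
        _ = 1 := by linarith
    · rw [Finset.smul_sum, Finset.smul_sum, ← Finset.sum_add_distrib]
      refine Finset.sum_congr rfl fun j _ => ?_
      rw [smul_smul, smul_smul, ← add_smul]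


lemma align (μ : κ' → ℝ) (a : κ' → ℤ)
    (ha : ∀ j, a j = 0 ∨ a j = 1 ∨ a j = -1)
    (t : ℤ) (ht : t ≠ 0) (hsum : (t : ℝ) = ∑ j, μ j * (a j : ℝ))
    (hb : ∑ j, |μ j| ≤ 1) :
    (t = 1 ∨ t = -1) ∧ (∑ j, |μ j|) = 1 ∧ ∀ j, μ j * (a j : ℝ) = (t : ℝ) * |μ j| := by
  have haR : ∀ j, |(a j : ℝ)| ≤ 1 := by
    intro j; rcases ha j with h | h | h <;> simp [h]
  have h1le : (1 : ℝ) ≤ |(t : ℝ)| := by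
    have h := Int.one_le_abs ht
    rw [← Int.cast_abs]
    exact_mod_cast h
  have habs : |(t : ℝ)| ≤ ∑ j, |μ j * (a j : ℝ)| := by
    rw [hsum]; exact Finset.abs_sum_le_sum_abs _ _
  have hterm : ∀ j, |μ j * (a j : ℝ)| ≤ |μ j| := by
    intro j; rw [abs_mul]
    calc |μ j| * |(a j:ℝ)| ≤ |μ j| * 1 := by
          exact mul_le_mul_of_nonneg_left (haR j) (abs_nonneg _)
      _ = |μ j| := mul_one _
  have hsum_le : ∑ j, |μ j * (a j : ℝ)| ≤ ∑ j, |μ j| :=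
    Finset.sum_le_sum fun j _ => hterm j
  -- all the inequalities collapse to equalities
  have key : |(t:ℝ)| = 1 ∧ (∑ j, |μ j * (a j:ℝ)| = ∑ j, |μ j|) ∧ (∑ j, |μ j| = 1) := by
    constructor
    · linarith
    constructor <;> linarith
  obtain ⟨ht1, heq1, heq2⟩ := key
  have htZ : t = 1 ∨ t = -1 := by
    have h : |t| = 1 := by
      have := ht1
      rw [← Int.cast_abs] at this
      exact_mod_cast this
    rcases abs_cases t with ⟨h1, _⟩ | ⟨h1, _⟩ <;> omega
  -- each term achieves its bound
  have hterm_eq : ∀ j, |μ j * (a j:ℝ)| = |μ j| := by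
    have hnn : ∀ j ∈ Finset.univ, 0 ≤ |μ j| - |μ j * (a j:ℝ)| := fun j _ => by
      linarith [hterm j]
    have hz : ∑ j, (|μ j| - |μ j * (a j:ℝ)|) = 0 := by
      rw [Finset.sum_sub_distrib]; linarith
    intro j
    have := (Finset.sum_eq_zero_iff_of_nonneg hnn).1 hz j (Finset.mem_univ j)
    linarith
  -- sign alignment
  have hsgn : ∀ j, (t:ℝ) * (μ j * (a j:ℝ)) = |μ j * (a j:ℝ)| := by
    have habs2 : ∀ j, |(t:ℝ) * (μ j * (a j:ℝ))| = |μ j * (a j:ℝ)| := by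
      intro j; rw [abs_mul, ht1, one_mul]
    have hnn : ∀ j ∈ Finset.univ, 0 ≤ |(t:ℝ) * (μ j * (a j:ℝ))| - (t:ℝ) * (μ j * (a j:ℝ)) :=
      fun j _ => by linarith [le_abs_self ((t:ℝ) * (μ j * (a j:ℝ)))]
    have hsumt : ∑ j, (t:ℝ) * (μ j * (a j:ℝ)) = 1 := by
      rw [← Finset.mul_sum, ← hsum]
      have : (t:ℝ) * (t:ℝ) = 1 := by
        rcases htZ with h | h <;> (subst h; norm_num)
      exact this
    have hsumabs : ∑ j, |(t:ℝ) * (μ j * (a j:ℝ))| = 1 := by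
      rw [Finset.sum_congr rfl fun j _ => habs2 j, heq1, heq2]
    have hz : ∑ j, (|(t:ℝ) * (μ j * (a j:ℝ))| - (t:ℝ) * (μ j * (a j:ℝ))) = 0 := by
      rw [Finset.sum_sub_distrib, hsumt, hsumabs, sub_self]
    intro j
    have := (Finset.sum_eq_zero_iff_of_nonneg hnn).1 hz j (Finset.mem_univ j)
    linarith [habs2 j]
  refine ⟨htZ, heq2, fun j => ?_⟩
  have h1 := hsgn j
  have h2 := hterm_eq j
  have ht2 : (t:ℝ) * (t:ℝ) = 1 := by rcases htZ with h | h <;> (subst h; norm_num)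
  calc μ j * (a j:ℝ) = ((t:ℝ) * (t:ℝ)) * (μ j * (a j:ℝ)) := by rw [ht2, one_mul]
    _ = (t:ℝ) * ((t:ℝ) * (μ j * (a j:ℝ))) := by ring
    _ = (t:ℝ) * |μ j * (a j:ℝ)| := by rw [h1]
    _ = (t:ℝ) * |μ j| := by rw [h2]

lemma main_abs [Nonempty κ'] (M : Matrix ι' κ' ℤ)
    (hlat : ∀ z : ι' → ℝ, z ∈ symPoly M → intVec z →
      ∃ c : κ' → ℤ, z = fun r => ((M.mulVec c r : ℤ) : ℝ))
    (x : ι' → ℤ) (q : ℕ) (hq : 0 < q) (u : κ' → ℤ) (hxu : (q : ℤ) • x = M.mulVec u)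
    (hnot : ¬ ∃ c : κ' → ℤ, x = M.mulVec c) : ¬ IsIDP (symPoly M) := by
  classical
  intro hidp
  set μ : κ' → ℝ := fun j => (u j : ℝ) / q with hμ
  set xR : ι' → ℝ := fun r => (x r : ℝ) with hxR
  have hqR : (q : ℝ) ≠ 0 := by positivity
  have hrep : xR = ∑ j, μ j • colR M j := by
    funext r
    have h := congrFun hxu r
    simp only [Pi.smul_apply, smul_eq_mul, Matrix.mulVec, dotProduct] at h
    have hR : (q:ℝ) * (x r : ℝ) = ∑ j, (M r j : ℝ) * (u j : ℝ) := by exact_mod_cast h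
    have : (x r : ℝ) = (∑ j, (M r j : ℝ) * (u j : ℝ)) / q := by
      field_simp at hR ⊢; linarith [hR]
    show (x r : ℝ) = _
    rw [this, Finset.sum_apply, Finset.sum_div]
    refine Finset.sum_congr rfl fun j _ => ?_
    simp only [Pi.smul_apply, smul_eq_mul, colR, hμ]
    field_simp
  set s : ℝ := ∑ j, |μ j| with hs
  set k : ℕ := ⌈s⌉₊ + 1 with hk
  have hkpos : (0:ℝ) < k := by positivity
  have hsk : s ≤ (k : ℝ) := by
    calc s ≤ ⌈s⌉₊ := Nat.le_ceil s
      _ ≤ (k:ℝ) := by exact_mod_cast Nat.le_succ _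
  set z₀ : ι' → ℝ := ∑ j, (μ j / k) • colR M j with hz₀
  have hz₀mem : z₀ ∈ symPoly M := by
    apply mem_symPoly_of_rep
    have : ∑ j, |μ j / k| = s / k := by
      rw [hs, Finset.sum_div]
      exact Finset.sum_congr rfl fun j _ => by rw [abs_div, abs_of_pos hkpos]
    rw [this, div_le_one hkpos]; exact hsk
  have hxmem : xR ∈ (k : ℝ) • symPoly M := by
    refine ⟨z₀, hz₀mem, ?_⟩
    show (k:ℝ) • z₀ = xR
    rw [hz₀, Finset.smul_sum, hrep]
    refine Finset.sum_congr rfl fun j _ => ?_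
    rw [smul_smul, mul_div_cancel₀ _ (ne_of_gt hkpos)]
  have hxint : intVec xR := fun r => ⟨x r, rfl⟩
  obtain ⟨f, hfmem, hfsum⟩ := hidp k xR hxint hxmem
  choose c hc using fun i => hlat (f i) (hfmem i).1 (hfmem i).2
  apply hnot
  refine ⟨∑ i, c i, ?_⟩
  funext r
  have hR : (x r : ℝ) = ((M.mulVec (∑ i, c i) r : ℤ) : ℝ) := by
    have h1 : (x r : ℝ) = ∑ i, f i r := by
      rw [← Finset.sum_apply (a := r) (g := f)]; exact congrFun hfsum r
    rw [h1]
    have h2 : M.mulVec (∑ i, c i) r = ∑ i, M.mulVec (c i) r := by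
      simp only [Matrix.mulVec, dotProduct, Finset.sum_apply, Finset.mul_sum]
      rw [Finset.sum_comm]
    rw [h2]
    push_cast
    exact Finset.sum_congr rfl fun i _ => by rw [hc i]
  exact_mod_cast hR


lemma transpose_witness [DecidableEq ι'] [DecidableEq κ'] (M : Matrix ι' κ' ℤ)
    (x : ι' → ℤ) (q : ℕ) (hq : 0 < q) (u : κ' → ℤ) (hxu : (q : ℤ) • x = M.mulVec u)
    (hnot : ¬ ∃ c : κ' → ℤ, x = M.mulVec c) :
    ∃ (y : κ' → ℤ) (N : ℕ) (v : ι' → ℤ), 0 < N ∧ (N : ℤ) • y = Mᵀ.mulVec v ∧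
      ¬ ∃ c : ι' → ℤ, y = Mᵀ.mulVec c := by
  by_contra hcon
  push_neg at hcon
  -- hcon : saturation of the row span
  apply hnot
  set T : (ι' → ℤ) →ₗ[ℤ] (κ' → ℤ) := Matrix.mulVecLin Mᵀ with hT
  set L : Submodule ℤ (κ' → ℤ) := LinearMap.range T with hL
  have hsat : ∀ (z : κ' → ℤ) (a : ℤ), a ≠ 0 → a • z ∈ L → z ∈ L := by
    intro z a ha hz
    have h1 : (a.natAbs : ℤ) • z ∈ L := by
      rcases Int.natAbs_eq a with h | h
      · rwa [← h]
      · rw [← neg_neg ((a.natAbs : ℤ) • z), ← neg_smul, ← h]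
        exact neg_mem hz
    obtain ⟨v, hv⟩ := h1
    have hNpos : 0 < a.natAbs := Int.natAbs_pos.2 ha
    obtain ⟨c, hc⟩ := hcon z a.natAbs v hNpos (by rw [← hv]; rfl)
    exact ⟨c, hc.symm⟩
  -- the functional w ↦ w ⬝ᵥ x kills ker T
  set g : (ι' → ℤ) →ₗ[ℤ] ℤ :=
    { toFun := fun w => w ⬝ᵥ x
      map_add' := fun w w' => add_dotProduct w w' x
      map_smul' := fun a w => by simp [dotProduct, Finset.mul_sum, mul_assoc] } with hg
  have hker : LinearMap.ker T ≤ LinearMap.ker g := by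
    intro w hw
    rw [LinearMap.mem_ker] at hw ⊢
    have hw' : Mᵀ.mulVec w = 0 := hw
    have h1 : (q : ℤ) * (w ⬝ᵥ x) = (Mᵀ.mulVec w) ⬝ᵥ u := by
      rw [← smul_eq_mul, ← dotProduct_smul, hxu, Matrix.dotProduct_mulVec,
        Matrix.mulVec_transpose]
    rw [hw', zero_dotProduct] at h1
    have hq' : (q : ℤ) ≠ 0 := by exact_mod_cast hq.ne'
    show w ⬝ᵥ x = 0
    exact (mul_eq_zero.1 h1).resolve_left hq'
  -- build f : L →ₗ ℤ with f (T w) = g w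
  set e := T.quotKerEquivRange with he
  set f : L →ₗ[ℤ] ℤ := ((LinearMap.ker T).liftQ g hker).comp (e.symm : L →ₗ[ℤ] _) with hf
  have hfT : ∀ w : ι' → ℤ, f ⟨T w, LinearMap.mem_range_self T w⟩ = g w := by
    intro w
    have h1 : e (Submodule.Quotient.mk w) = ⟨T w, LinearMap.mem_range_self T w⟩ :=
      Subtype.ext (T.quotKerEquivRange_apply_mk w)
    have h2 : e.symm ⟨T w, LinearMap.mem_range_self T w⟩ = Submodule.Quotient.mk w := by
      rw [LinearEquiv.symm_apply_eq, h1]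
    rw [hf, LinearMap.comp_apply]
    have h3 : (e.symm : L →ₗ[ℤ] ((ι' → ℤ) ⧸ LinearMap.ker T))
        ⟨T w, LinearMap.mem_range_self T w⟩ = Submodule.Quotient.mk w := by
      rw [LinearEquiv.coe_coe]; exact h2
    rw [h3]
    exact Submodule.liftQ_apply _ g w
  -- the quotient is torsion-free hence free hence projective; get a retraction
  haveI : NoZeroSMulDivisors ℤ ((κ' → ℤ) ⧸ L) := by
    refine ⟨fun {a zq} h => ?_⟩
    by_cases ha : a = 0
    · exact Or.inl ha
    · right
      obtain ⟨z, rfl⟩ := Submodule.Quotient.mk_surjective L zq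
      rw [← Submodule.Quotient.mk_smul, Submodule.Quotient.mk_eq_zero] at h
      rw [Submodule.Quotient.mk_eq_zero]
      exact hsat z a ha h
  obtain ⟨h, hh⟩ := Module.projective_lifting_property L.mkQ LinearMap.id
    (Submodule.mkQ_surjective L)
  set ρ : (κ' → ℤ) →ₗ[ℤ] (κ' → ℤ) := LinearMap.id - h.comp L.mkQ with hρ
  have hρL : ∀ z, ρ z ∈ L := by
    intro z
    have : L.mkQ (ρ z) = 0 := by
      rw [hρ]
      simp only [LinearMap.sub_apply, map_sub, LinearMap.id_apply, LinearMap.comp_apply]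
      have := congrFun (congrArg DFunLike.coe hh) (L.mkQ z)
      simp only [LinearMap.comp_apply, LinearMap.id_apply] at this
      rw [this, sub_self]
    have h4 : ρ z ∈ LinearMap.ker L.mkQ := this
    rwa [Submodule.ker_mkQ] at h4
  have hρid : ∀ z ∈ L, ρ z = z := by
    intro z hz
    rw [hρ]
    simp only [LinearMap.sub_apply, LinearMap.id_apply, LinearMap.comp_apply]
    have : L.mkQ z = 0 := by
      rwa [← LinearMap.mem_ker, Submodule.ker_mkQ]
    rw [this, map_zero, sub_zero]
  set F : (κ' → ℤ) →ₗ[ℤ] ℤ := f.comp (ρ.codRestrict L hρL) with hF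
  have hFT : ∀ w : ι' → ℤ, F (T w) = g w := by
    intro w
    have h1 : (ρ.codRestrict L hρL) (T w) = ⟨T w, LinearMap.mem_range_self T w⟩ := by
      apply Subtype.ext
      rw [LinearMap.codRestrict_apply]
      exact hρid (T w) (LinearMap.mem_range_self T w)
    rw [hF, LinearMap.comp_apply, h1]
    exact hfT w
  set y : κ' → ℤ := fun j => F (Pi.single j 1) with hy
  have hFz : ∀ z : κ' → ℤ, F z = ∑ j, z j * y j := by
    intro z
    have hdecomp : z = ∑ j, z j • (Pi.single j 1 : κ' → ℤ) := by
      funext j'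
      rw [Finset.sum_apply]
      simp [Pi.single_apply, Finset.sum_ite_eq]
    calc F z = F (∑ j, z j • (Pi.single j 1 : κ' → ℤ)) := by rw [← hdecomp]
      _ = ∑ j, z j • F (Pi.single j 1) := by
            rw [map_sum]
            exact Finset.sum_congr rfl (fun j _ => map_smul F (z j) _)
      _ = ∑ j, z j * y j := rfl
  refine ⟨y, ?_⟩
  funext r
  have hrow : Mᵀ.mulVec (Pi.single r 1) = fun j => M r j := by
    funext j
    rw [Matrix.mulVec_single]
    simp [Matrix.transpose_apply]
  have h1 : F (fun j => M r j) = x r := by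
    rw [← hrow]
    have : Mᵀ.mulVec (Pi.single r 1) = T (Pi.single r 1) := rfl
    rw [this, hFT]
    simp [hg, dotProduct, Pi.single_apply, Finset.sum_ite_eq]
  have h2 : F (fun j => M r j) = ∑ j, M r j * y j := hFz _
  rw [Matrix.mulVec, dotProduct]
  rw [← h2, h1]


-- basic facts about bEntry
lemma bEntry_eq_zero {n : ℕ} {τ σ : Finset (Fin n)}
    (h : ¬(τ ⊆ σ ∧ σ.card = τ.card + 1)) : bEntry τ σ = 0 := by
  rw [bEntry, if_neg h]

lemma bEntry_cases {n : ℕ} {τ σ : Finset (Fin n)} (h1 : τ ⊆ σ)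
    (h2 : σ.card = τ.card + 1) : bEntry τ σ = 1 ∨ bEntry τ σ = -1 := by
  have hcard : (σ \ τ).card = 1 := by
    rw [Finset.card_sdiff_of_subset h1, h2]; omega
  obtain ⟨v, hv⟩ := Finset.card_eq_one.1 hcard
  rw [bEntry, if_pos ⟨h1, h2⟩, hv, Finset.sum_singleton]
  rcases Nat.even_or_odd ((σ.filter fun w => w < v).card) with h | h
  · left; exact h.neg_one_pow
  · right; exact h.neg_one_pow

lemma bEntry_trichotomy {n : ℕ} (τ σ : Finset (Fin n)) :
    bEntry τ σ = 0 ∨ bEntry τ σ = 1 ∨ bEntry τ σ = -1 := by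
  by_cases h : τ ⊆ σ ∧ σ.card = τ.card + 1
  · exact Or.inr (bEntry_cases h.1 h.2)
  · exact Or.inl (bEntry_eq_zero h)

lemma of_bEntry_ne_zero {n : ℕ} {τ σ : Finset (Fin n)} (h : bEntry τ σ ≠ 0) :
    τ ⊆ σ ∧ σ.card = τ.card + 1 := by
  by_contra hc
  exact h (bEntry_eq_zero hc)

lemma bEntry_sq {n : ℕ} {τ σ : Finset (Fin n)} (h1 : τ ⊆ σ)
    (h2 : σ.card = τ.card + 1) : bEntry τ σ * bEntry τ σ = 1 := by
  rcases bEntry_cases h1 h2 with h | h <;> rw [h] <;> norm_num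



lemma latt_col {n i : ℕ} (K : SC n) (z : K.fdex (i+1) → ℝ)
    (hz : z ∈ symPoly (K.B (i+1))) (hint : intVec z) :
    ∃ c : K.fdex (i+2) → ℤ, z = fun r => (((K.B (i+1)).mulVec c r : ℤ) : ℝ) := by
  classical
  obtain ⟨μ, hb, hrep⟩ := rep_of_mem_symPoly _ hz
  have hzcoord : ∀ r, z r = ∑ j, μ j * ((K.B (i+1)) r j : ℝ) := by
    intro r
    rw [hrep, Finset.sum_apply]
    exact Finset.sum_congr rfl fun j _ => by simp [colR]
  by_cases hz0 : z = 0
  · refine ⟨0, ?_⟩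
    funext r
    rw [hz0]
    simp
  have hex : ∃ τ₀, z τ₀ ≠ 0 := by
    by_contra h; push_neg at h; exact hz0 (funext fun r => h r)
  obtain ⟨τ₀, hτ₀⟩ := hex
  obtain ⟨t, ht⟩ := hint τ₀
  have htne : t ≠ 0 := by rintro rfl; exact hτ₀ (by rw [ht]; norm_num)
  set a : K.fdex (i+2) → ℤ := fun σ => K.B (i+1) τ₀ σ with ha
  obtain ⟨htpm, hsum1, hal⟩ := align μ a (fun j => bEntry_trichotomy _ _) t htne
    (by rw [← ht, hzcoord τ₀]) hb
  have htR : ((t:ℝ) = 1 ∨ (t:ℝ) = -1) := by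
    rcases htpm with h | h <;> [left; right] <;> rw [h] <;> norm_num
  have haj : ∀ j, μ j ≠ 0 → a j ≠ 0 := by
    intro j hμj h0
    have h2 : (t:ℝ) * |μ j| = 0 := by rw [← hal j, h0]; norm_num
    have h3 : |μ j| = 0 := by
      rcases htR with h | h <;> rw [h] at h2 <;> [linarith; linarith]
    exact hμj (abs_eq_zero.1 h3)
  have hbig : ∀ j, μ j ≠ 0 → 1 ≤ |μ j| := by
    intro j hμj
    obtain ⟨hsub, hcard⟩ := of_bEntry_ne_zero (haj j hμj)
    obtain ⟨v, hv⟩ := Finset.card_eq_one.1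
      (show (j.1 \ τ₀.1).card = 1 by rw [Finset.card_sdiff_of_subset hsub, hcard]; omega)
    have hvτ : v ∉ τ₀.1 := by
      have : v ∈ j.1 \ τ₀.1 := by rw [hv]; exact Finset.mem_singleton_self v
      exact (Finset.mem_sdiff.1 this).2
    have hσ : insert v τ₀.1 = j.1 := by
      rw [Finset.insert_eq, ← hv]
      exact Finset.sdiff_union_of_subset hsub
    obtain ⟨w, hw⟩ : τ₀.1.Nonempty := Finset.card_pos.1 (by rw [τ₀.2.2]; omega)
    set τ' : Finset (Fin n) := insert v (τ₀.1.erase w) with hτ'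
    have hτ'card : τ'.card = i + 2 := by
      rw [hτ', Finset.card_insert_of_notMem (fun hc => hvτ (Finset.mem_of_mem_erase hc)),
        Finset.card_erase_of_mem hw, τ₀.2.2]
      omega
    have hτ'sub : τ' ⊆ j.1 := by
      rw [hτ']
      apply Finset.insert_subset
      · rw [← hσ]; exact Finset.mem_insert_self v _
      · exact (Finset.erase_subset w τ₀.1).trans hsub
    have hτ'face : τ' ∈ K.faces :=
      K.down_closed j.1 j.2.1 τ' hτ'sub ⟨v, Finset.mem_insert_self v _⟩
    set τ'el : K.fdex (i+1) := ⟨τ', ⟨hτ'face, hτ'card⟩⟩ with hτ'el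
    have hcard' : j.1.card = τ'.card + 1 := by rw [hτ'card, hcard, τ₀.2.2]
    have hzτ' : z τ'el = μ j * ((bEntry τ' j.1 : ℤ) : ℝ) := by
      rw [hzcoord τ'el]
      rw [Finset.sum_eq_single j]
      · rfl
      · intro k _ hkj
        by_cases hμk : μ k = 0
        · rw [hμk, zero_mul]
        · by_cases hbk : bEntry τ' k.1 = 0
          · show μ k * ((bEntry τ' k.1 : ℤ) : ℝ) = 0
            rw [hbk]; norm_num
          · exfalso
            obtain ⟨hsubk, _⟩ := of_bEntry_ne_zero (haj k hμk)
            obtain ⟨hsub', _⟩ := of_bEntry_ne_zero hbk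
            have h5 : insert v τ₀.1 ⊆ k.1 := by
              apply Finset.insert_subset
              · exact hsub' (Finset.mem_insert_self v _)
              · exact hsubk
            have h6 : insert v τ₀.1 = k.1 := by
              apply Finset.eq_of_subset_of_card_le h5
              rw [Finset.card_insert_of_notMem hvτ, k.2.2, τ₀.2.2]
            exact hkj (Subtype.ext (by rw [← h6, hσ]))
      · intro h; exact absurd (Finset.mem_univ j) h
    obtain ⟨m, hm⟩ := hint τ'el
    have hbj : bEntry τ' j.1 = 1 ∨ bEntry τ' j.1 = -1 := bEntry_cases hτ'sub hcard'
    have habs : |z τ'el| = |μ j| := by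
      rw [hzτ', abs_mul]
      rcases hbj with h | h <;> rw [h] <;> norm_num
    have hmne : m ≠ 0 := by
      rintro rfl
      rw [hm] at hzτ'
      norm_num at hzτ'
      rcases hbj with h | h <;> rw [h] at hzτ' <;> norm_num at hzτ' <;> exact hμj hzτ'
    have : (1:ℝ) ≤ |(m:ℝ)| := by
      have := Int.one_le_abs hmne
      rw [← Int.cast_abs]
      exact_mod_cast this
    rw [← habs, hm]
    exact this
  have huniq : ∀ j k, μ j ≠ 0 → μ k ≠ 0 → j = k := by
    intro j k hj hk
    by_contra hne
    have h1 := hbig j hj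
    have h2 := hbig k hk
    have hpair : |μ j| + |μ k| ≤ ∑ l, |μ l| := by
      calc |μ j| + |μ k| = ∑ l ∈ ({j, k} : Finset _), |μ l| := (Finset.sum_pair (f := fun l => |μ l|) hne).symm
        _ ≤ ∑ l, |μ l| := Finset.sum_le_sum_of_subset_of_nonneg (Finset.subset_univ _)
            (fun l _ _ => abs_nonneg _)
    linarith
  obtain ⟨j₁, hj₁⟩ : ∃ j, μ j ≠ 0 := by
    by_contra h; push_neg at h
    apply hz0; funext r
    rw [show z r = _ from hzcoord r]
    show _ = (0 : K.fdex (i+1) → ℝ) r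
    rw [Finset.sum_eq_zero (fun j _ => by rw [h j, zero_mul])]
    rfl
  have hμ0 : ∀ k, k ≠ j₁ → μ k = 0 := fun k hk => by
    by_contra hc; exact hk (huniq k j₁ hc hj₁)
  have habs1 : |μ j₁| = 1 := by
    rw [← hsum1]
    exact (Finset.sum_eq_single (f := fun l => |μ l|) j₁
      (fun k _ hk => by simp [hμ0 k hk])
      (fun h => absurd (Finset.mem_univ _) h)).symm
  have hsq : ((a j₁ : ℤ):ℝ) * ((a j₁:ℤ):ℝ) = 1 := by
    rcases bEntry_trichotomy τ₀.1 j₁.1 with h | h | h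
    · exact absurd h (haj j₁ hj₁)
    · rw [show a j₁ = 1 from h]; norm_num
    · rw [show a j₁ = -1 from h]; norm_num
  have hμval : μ j₁ = ((t * a j₁ : ℤ) : ℝ) := by
    have h7 := hal j₁
    rw [habs1, mul_one] at h7
    push_cast
    calc μ j₁ = μ j₁ * (((a j₁:ℤ):ℝ) * ((a j₁:ℤ):ℝ)) := by rw [hsq, mul_one]
      _ = (μ j₁ * ((a j₁:ℤ):ℝ)) * ((a j₁:ℤ):ℝ) := by ring
      _ = (t:ℝ) * ((a j₁:ℤ):ℝ) := by rw [h7]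
  refine ⟨Pi.single j₁ (t * a j₁), ?_⟩
  funext r
  rw [hzcoord r, Matrix.mulVec_single]
  show _ = (((K.B (i+1)) r j₁ * (t * a j₁) : ℤ) : ℝ)
  rw [Finset.sum_eq_single j₁ (fun k _ hk => by rw [hμ0 k hk, zero_mul])
    (fun h => absurd (Finset.mem_univ _) h)]
  rw [hμval]
  push_cast
  ring


lemma latt_row {n i : ℕ} (K : SC n) (z : K.fdex (i+2) → ℝ)
    (hz : z ∈ symPoly (K.B (i+1))ᵀ) (hint : intVec z) :
    ∃ c : K.fdex (i+1) → ℤ, z = fun r => (((K.B (i+1))ᵀ.mulVec c r : ℤ) : ℝ) := by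
  classical
  obtain ⟨μ, hb, hrep⟩ := rep_of_mem_symPoly _ hz
  have hzcoord : ∀ r : K.fdex (i+2), z r = ∑ τ, μ τ * ((bEntry τ.1 r.1 : ℤ) : ℝ) := by
    intro r
    rw [hrep, Finset.sum_apply]
    exact Finset.sum_congr rfl fun τ _ => by
      simp [colR, Matrix.transpose_apply, SC.B]
  by_cases hz0 : z = 0
  · exact ⟨0, by funext r; rw [hz0]; simp⟩
  obtain ⟨σ₀, hσ₀⟩ : ∃ σ₀, z σ₀ ≠ 0 := by
    by_contra h; push_neg at h; exact hz0 (funext fun r => h r)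
  obtain ⟨t, ht⟩ := hint σ₀
  have htne : t ≠ 0 := by rintro rfl; exact hσ₀ (by rw [ht]; norm_num)
  set a : K.fdex (i+1) → ℤ := fun τ => bEntry τ.1 σ₀.1 with ha
  obtain ⟨htpm, hsum1, hal⟩ := align μ a (fun τ => bEntry_trichotomy _ _) t htne
    (by rw [← ht, hzcoord σ₀]) hb
  have htR : ((t:ℝ) = 1 ∨ (t:ℝ) = -1) := by
    rcases htpm with h | h <;> [left; right] <;> rw [h] <;> norm_num
  have haτ : ∀ τ, μ τ ≠ 0 → a τ ≠ 0 := by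
    intro τ hμτ h0
    have h2 : (t:ℝ) * |μ τ| = 0 := by rw [← hal τ, h0]; norm_num
    have h3 : |μ τ| = 0 := by
      rcases htR with h | h <;> rw [h] at h2 <;> [linarith; linarith]
    exact hμτ (abs_eq_zero.1 h3)
  by_cases hcase : ∃ (τ : K.fdex (i+1)) (σ₁ : K.fdex (i+2)),
      μ τ ≠ 0 ∧ τ.1 ⊆ σ₁.1 ∧ σ₁ ≠ σ₀
  · -- some support ridge lies in a second facet
    obtain ⟨τs, σ₁, hμτ, hsubs, hne⟩ := hcase
    obtain ⟨hsub0, hcard0⟩ := of_bEntry_ne_zero (haτ τs hμτ)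
    have hcap : (σ₀.1 ∩ σ₁.1).card ≤ i + 2 := by
      by_contra hc
      push_neg at hc
      have h1 : σ₀.1.card ≤ (σ₀.1 ∩ σ₁.1).card := by rw [σ₀.2.2]; omega
      have h2 : σ₀.1 ∩ σ₁.1 = σ₀.1 :=
        Finset.eq_of_subset_of_card_le Finset.inter_subset_left h1
      have h3 : σ₀.1 ⊆ σ₁.1 := by
        rw [← h2]; exact Finset.inter_subset_right
      have h4 : σ₀.1 = σ₁.1 :=
        Finset.eq_of_subset_of_card_le h3 (by rw [σ₀.2.2, σ₁.2.2])
      exact hne (Subtype.ext h4.symm)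
    have hτsint : τs.1 = σ₀.1 ∩ σ₁.1 :=
      Finset.eq_of_subset_of_card_le (Finset.subset_inter hsub0 hsubs)
        (by rw [τs.2.2]; exact hcap)
    have hzσ₁ : z σ₁ = μ τs * ((bEntry τs.1 σ₁.1 : ℤ) : ℝ) := by
      rw [hzcoord σ₁]
      rw [Finset.sum_eq_single τs]
      · intro k _ hk
        by_cases hμk : μ k = 0
        · rw [hμk, zero_mul]
        · by_cases hbk : bEntry k.1 σ₁.1 = 0
          · rw [hbk]; norm_num
          · exfalso
            obtain ⟨hsubk0, _⟩ := of_bEntry_ne_zero (haτ k hμk)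
            obtain ⟨hsubk1, _⟩ := of_bEntry_ne_zero hbk
            have hk2 : k.1 = σ₀.1 ∩ σ₁.1 :=
              Finset.eq_of_subset_of_card_le (Finset.subset_inter hsubk0 hsubk1)
                (by rw [k.2.2]; exact hcap)
            exact hk (Subtype.ext (by rw [hk2, ← hτsint]))
      · intro h; exact absurd (Finset.mem_univ _) h
    obtain ⟨m, hm⟩ := hint σ₁
    have hbτ : bEntry τs.1 σ₁.1 = 1 ∨ bEntry τs.1 σ₁.1 = -1 :=
      bEntry_cases hsubs (by rw [σ₁.2.2, τs.2.2])
    have habs : |z σ₁| = |μ τs| := by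
      rw [hzσ₁, abs_mul]
      rcases hbτ with h | h <;> rw [h] <;> norm_num
    have hmne : m ≠ 0 := by
      rintro rfl
      rw [hm] at hzσ₁
      norm_num at hzσ₁
      rcases hbτ with h | h <;> rw [h] at hzσ₁ <;> norm_num at hzσ₁ <;> exact hμτ hzσ₁
    have hbig : (1:ℝ) ≤ |μ τs| := by
      have h5 : (1:ℝ) ≤ |(m:ℝ)| := by
        have := Int.one_le_abs hmne
        rw [← Int.cast_abs]
        exact_mod_cast this
      rw [← habs, hm]
      exact h5
    have hμ0 : ∀ k, k ≠ τs → μ k = 0 := by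
      intro k hk
      by_contra hc
      have h6 : (0:ℝ) < |μ k| := abs_pos.2 hc
      have hpair : |μ k| + |μ τs| ≤ ∑ l, |μ l| := by
        calc |μ k| + |μ τs| = ∑ l ∈ ({k, τs} : Finset _), |μ l| :=
              (Finset.sum_pair (f := fun l => |μ l|) hk).symm
          _ ≤ ∑ l, |μ l| := Finset.sum_le_sum_of_subset_of_nonneg (Finset.subset_univ _)
              (fun l _ _ => abs_nonneg _)
      linarith
    have habs1 : |μ τs| = 1 := by
      rw [← hsum1]
      exact (Finset.sum_eq_single (f := fun l => |μ l|) τs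
        (fun k _ hk => by simp [hμ0 k hk])
        (fun h => absurd (Finset.mem_univ _) h)).symm
    have hsq : ((a τs : ℤ):ℝ) * ((a τs:ℤ):ℝ) = 1 := by
      rcases bEntry_trichotomy τs.1 σ₀.1 with h | h | h
      · exact absurd h (haτ τs hμτ)
      · rw [show a τs = 1 from h]; norm_num
      · rw [show a τs = -1 from h]; norm_num
    have hμval : μ τs = ((t * a τs : ℤ) : ℝ) := by
      have h7 := hal τs
      rw [habs1, mul_one] at h7
      push_cast
      calc μ τs = μ τs * (((a τs:ℤ):ℝ) * ((a τs:ℤ):ℝ)) := by rw [hsq, mul_one]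
        _ = (μ τs * ((a τs:ℤ):ℝ)) * ((a τs:ℤ):ℝ) := by ring
        _ = (t:ℝ) * ((a τs:ℤ):ℝ) := by rw [h7]
    refine ⟨Pi.single τs (t * a τs), ?_⟩
    funext r
    rw [hzcoord r, Matrix.mulVec_single]
    show _ = ((bEntry τs.1 r.1 * (t * a τs) : ℤ) : ℝ)
    rw [Finset.sum_eq_single τs (fun k _ hk => by rw [hμ0 k hk, zero_mul])
      (fun h => absurd (Finset.mem_univ _) h)]
    rw [hμval]
    push_cast
    ring
  · -- all support ridges lie only in σ₀
    push_neg at hcase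
    obtain ⟨τs, hμτ⟩ : ∃ τ, μ τ ≠ 0 := by
      by_contra h; push_neg at h
      apply hz0; funext r
      rw [show z r = _ from hzcoord r]
      show _ = (0 : K.fdex (i+2) → ℝ) r
      rw [Finset.sum_eq_zero (fun τ _ => by rw [h τ, zero_mul])]
      rfl
    obtain ⟨hsub0, hcard0⟩ := of_bEntry_ne_zero (haτ τs hμτ)
    refine ⟨Pi.single τs (t * bEntry τs.1 σ₀.1), ?_⟩
    funext r
    rw [Matrix.mulVec_single]
    show z r = (((K.B (i+1))ᵀ r τs * (t * bEntry τs.1 σ₀.1) : ℤ) : ℝ)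
    by_cases hr : r = σ₀
    · subst hr
      have hsq := bEntry_sq hsub0 hcard0
      have hval : (K.B (i+1))ᵀ r τs * (t * bEntry τs.1 r.1) = t := by
        show bEntry τs.1 r.1 * (t * bEntry τs.1 r.1) = t
        rw [mul_comm (bEntry τs.1 r.1) (t * bEntry τs.1 r.1), mul_assoc, hsq, mul_one]
      rw [hval, ht]
    · have hb0 : bEntry τs.1 r.1 = 0 := by
        by_contra hc
        obtain ⟨hs, _⟩ := of_bEntry_ne_zero hc
        exact hr (hcase τs r hμτ hs)
      have hz0r : z r = 0 := by
        rw [hzcoord r]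
        apply Finset.sum_eq_zero
        intro τ _
        by_cases hμτ' : μ τ = 0
        · rw [hμτ', zero_mul]
        · have hbz : bEntry τ.1 r.1 = 0 := by
            by_contra hc
            obtain ⟨hs, _⟩ := of_bEntry_ne_zero hc
            exact hr (hcase τ r hμτ' hs)
          rw [hbz]; norm_num
      rw [hz0r]
      show (0:ℝ) = ((bEntry τs.1 r.1 * (t * bEntry τs.1 σ₀.1) : ℤ) : ℝ)
      rw [hb0, zero_mul]
      norm_num


end Stmt11Aux

/-- Let `Δ` be a `d`-dimensional simplicial complex (`d = i+2 ≥ 2`)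
whose `(d−1)`-st integral homology `ker ∂_{d−1} / im ∂_d` has nontrivial torsion,
witnessed by a `(d−1)`-cycle `x` not in `im_ℤ ∂_d` with `q • x ∈ im_ℤ ∂_d` for some
`q > 0`. Then neither `P_Δ` nor `P^Δ` has the integer decomposition property. -/
theorem stmt11 (n i : ℕ) (K : SC n) (hdim : K.dimIs (i + 2))
    (x : K.fdex (i + 1) → ℤ)
    (hcyc : (K.B i).mulVec x = 0)
    (hnot : ¬ ∃ u : K.fdex (i + 2) → ℤ, x = (K.B (i + 1)).mulVec u)
    (q : ℕ) (hq : 0 < q)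
    (htor : ∃ u : K.fdex (i + 2) → ℤ, (q : ℤ) • x = (K.B (i + 1)).mulVec u) :
    ¬ IsIDP (symPoly (K.B (i + 1))) ∧ ¬ IsIDP (symPoly (K.B (i + 1))ᵀ) := by
  classical
  have hκ : Nonempty (K.fdex (i + 2)) := by
    obtain ⟨σ, hσ, hcard⟩ := hdim.2
    exact ⟨⟨σ, hσ, hcard⟩⟩
  have hι : Nonempty (K.fdex (i + 1)) := by
    obtain ⟨σ, hσ, hcard⟩ := hdim.2
    obtain ⟨τ, hτsub, hτcard⟩ := Finset.exists_subset_card_eq (show i + 2 ≤ σ.card by rw [hcard]; omega)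
    have hτne : τ.Nonempty := Finset.card_pos.1 (by rw [hτcard]; omega)
    exact ⟨⟨τ, K.down_closed σ hσ τ hτsub hτne, hτcard⟩⟩
  obtain ⟨u, hu⟩ := htor
  constructor
  · exact Stmt11Aux.main_abs (K.B (i + 1))
      (fun z hz hint => Stmt11Aux.latt_col K z hz hint) x q hq u hu hnot
  · obtain ⟨y, N, v, hN, hNy, hynot⟩ :=
      Stmt11Aux.transpose_witness (K.B (i + 1)) x q hq u hu hnot
    exact Stmt11Aux.main_abs (K.B (i + 1))ᵀ
      (fun z hz hint => Stmt11Aux.latt_row K z hz hint) y N hN v hNy hynot
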